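/- Let h be a positive integer and let a, b be integers with 1 ≤ a ≤ h−1 and 1 ≤ b ≤ h−1, and let T = conv{(0,0), (a,h), (h,b)}, so that ls_□(T) = h. Then T is minimal (i.e., every lattice polygon properly contained in T has ls_□ strictly less than h) if and only if a + b ≥ h. -/

import Mathlib

open Set MeasureTheory Pointwise

/-- A plane convex body: a compact convex subset of ℝ² with nonempty interior. -/
def IsPlaneConvexBody (P : Set (Fin 2 → ℝ)) : Prop :=
  IsCompact P ∧ Convex ℝ P ∧ (interior P).Nonempty

/-- The width of `P` in the direction `u`. -/
noncomputable def width (P : Set (Fin 2 → ℝ)) (u : Fin 2 → ℝ) : ℝ :=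
  sSup ((fun p => u 0 * p 0 + u 1 * p 1) '' P) -
    sInf ((fun p => u 0 * p 0 + u 1 * p 1) '' P)

/-- An affine unimodular transformation: multiplication by an integer matrix with
determinant `±1` followed by a translation by an integer vector. -/
def IsUnimodularMap (φ : (Fin 2 → ℝ) → (Fin 2 → ℝ)) : Prop :=
  ∃ (A : Matrix (Fin 2) (Fin 2) ℤ) (t : Fin 2 → ℤ),
    (A.det = 1 ∨ A.det = -1) ∧
    ∀ x, φ x = (A.map (Int.cast : ℤ → ℝ)).mulVec x + fun i => (t i : ℝ)

/-- Two subsets of ℝ² are lattice-equivalent if one is the image of the other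
under an affine unimodular transformation. -/
def LatticeEquivalent (P Q : Set (Fin 2 → ℝ)) : Prop :=
  ∃ φ, IsUnimodularMap φ ∧ Q = φ '' P

/-- The `l`-dilate of the unit square, `[0,l]²`. -/
def squareDilate (l : ℝ) : Set (Fin 2 → ℝ) :=
  {x | ∀ i, x i ∈ Set.Icc 0 l}

/-- The `l`-dilate of the standard 2-simplex. -/
def simplexDilate (l : ℝ) : Set (Fin 2 → ℝ) :=
  {x | 0 ≤ x 0 ∧ 0 ≤ x 1 ∧ x 0 + x 1 ≤ l}

/-- The lattice size of `P` with respect to the unit square. -/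
noncomputable def lsSquare (P : Set (Fin 2 → ℝ)) : ℝ :=
  sInf {l : ℝ | 0 ≤ l ∧ ∃ φ, IsUnimodularMap φ ∧ φ '' P ⊆ squareDilate l}

/-- The lattice size of `P` with respect to the standard simplex. -/
noncomputable def lsDelta (P : Set (Fin 2 → ℝ)) : ℝ :=
  sInf {l : ℝ | 0 ≤ l ∧ ∃ φ, IsUnimodularMap φ ∧ φ '' P ⊆ simplexDilate l}

/-- The lattice width of `P`: the minimum of `width P u` over primitive integer
directions `u`. -/
noncomputable def latticeWidth (P : Set (Fin 2 → ℝ)) : ℝ :=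
  sInf {w : ℝ | ∃ u : Fin 2 → ℤ, Int.gcd (u 0) (u 1) = 1 ∧
    w = width P (fun i => (u i : ℝ))}

/-- A lattice polygon: the convex hull of a (nonempty) finite set of points of ℤ². -/
def IsLatticePolygon (P : Set (Fin 2 → ℝ)) : Prop :=
  ∃ S : Finset (Fin 2 → ℤ), S.Nonempty ∧
    P = convexHull ℝ ((fun p : Fin 2 → ℤ => fun i => (p i : ℝ)) '' (S : Set (Fin 2 → ℤ)))

/-- The area of a plane set: its two-dimensional Lebesgue measure. -/
noncomputable def area (P : Set (Fin 2 → ℝ)) : ℝ :=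
  (volume P).toReal


/-! ### Auxiliary lemmas -/

lemma aux_lin2 (c0 c1 : ℝ) : IsLinearMap ℝ (fun x : Fin 2 → ℝ => c0 * x 0 + c1 * x 1) := by
  constructor
  · intro x y; simp [Pi.add_apply]; ring
  · intro r x; simp [Pi.smul_apply, smul_eq_mul]; ring

lemma aux_hull_le {X : Set (Fin 2 → ℝ)} (c0 c1 r : ℝ)
    (hs : ∀ v ∈ X, c0 * v 0 + c1 * v 1 ≤ r) :
    ∀ x ∈ convexHull ℝ X, c0 * x 0 + c1 * x 1 ≤ r := fun _ hx =>
  convexHull_min hs (convex_halfSpace_le (aux_lin2 c0 c1) r) hx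

lemma aux_convex_squareDilate (l : ℝ) : Convex ℝ (squareDilate l) := by
  intro x hx y hy α β hα hβ hαβ i
  have := (convex_Icc (0:ℝ) l) (hx i) (hy i) hα hβ hαβ
  simpa [Pi.add_apply, Pi.smul_apply, smul_eq_mul] using this

lemma aux_convex_pre (M : Matrix (Fin 2) (Fin 2) ℝ) (c : Fin 2 → ℝ) {Q : Set (Fin 2 → ℝ)}
    (hQ : Convex ℝ Q) : Convex ℝ {x | M.mulVec x + c ∈ Q} := by
  intro x hx y hy α β hα hβ hαβ
  have key : M.mulVec (α • x + β • y) + c = α • (M.mulVec x + c) + β • (M.mulVec y + c) := by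
    rw [Matrix.mulVec_add, Matrix.mulVec_smul, Matrix.mulVec_smul, smul_add, smul_add]
    funext i
    simp only [Pi.add_apply, Pi.smul_apply, smul_eq_mul]
    have : α * c i + β * c i = c i := by rw [← add_mul, hαβ, one_mul]
    linarith
  show M.mulVec (α • x + β • y) + c ∈ Q
  rw [key]
  exact hQ hx hy hα hβ hαβ

lemma aux_image_hull_subset (M : Matrix (Fin 2) (Fin 2) ℝ) (c : Fin 2 → ℝ)
    (φ : (Fin 2 → ℝ) → (Fin 2 → ℝ)) (hφ : ∀ x, φ x = M.mulVec x + c)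
    (X : Set (Fin 2 → ℝ)) {Q : Set (Fin 2 → ℝ)} (hQ : Convex ℝ Q)
    (hX : ∀ v ∈ X, M.mulVec v + c ∈ Q) :
    φ '' (convexHull ℝ X) ⊆ Q := by
  rw [Set.image_subset_iff]
  have h2 : convexHull ℝ X ⊆ {x | M.mulVec x + c ∈ Q} :=
    convexHull_min hX (aux_convex_pre M c hQ)
  intro x hx
  simp only [Set.mem_preimage, hφ]
  exact h2 hx

lemma aux_ls_le (X : Set (Fin 2 → ℝ)) (l : ℝ) (hl : 0 ≤ l)
    (A : Matrix (Fin 2) (Fin 2) ℤ) (t : Fin 2 → ℤ) (hdet : A.det = 1 ∨ A.det = -1)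
    (hX : ∀ v ∈ X,
      (A.map (Int.cast : ℤ → ℝ)).mulVec v + (fun i => (t i : ℝ)) ∈ squareDilate l) :
    lsSquare (convexHull ℝ X) ≤ l := by
  apply csInf_le ⟨0, fun m hm => hm.1⟩
  exact ⟨hl, _, ⟨A, t, hdet, fun x => rfl⟩,
    aux_image_hull_subset _ _ _ (fun x => rfl) X (aux_convex_squareDilate l) hX⟩

lemma aux_crux (h a b p q : ℤ) (ha1 : 1 ≤ a) (hb1 : 1 ≤ b) (hab : a + b ≤ h - 1)
    (e1l : -(h-1) ≤ p*h + q*b) (e1u : p*h + q*b ≤ h-1)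
    (e3l : -(h-1) ≤ (p*h + q*b) - (p*a + q*(h-1)))
    (e3u : (p*h + q*b) - (p*a + q*(h-1)) ≤ h-1) : p = 0 := by
  by_contra hp
  have hh3 : 3 ≤ h := by omega
  rcases lt_or_gt_of_ne hp with hneg | hpos
  · have hp1 : p ≤ -1 := by omega
    have hq : 1 ≤ q := by nlinarith
    nlinarith
  · have hp1 : 1 ≤ p := by omega
    have hq : q ≤ -1 := by nlinarith
    nlinarith

section CaseLemmas
variable (h a b x y : ℤ) (ha1 : 1 ≤ a) (ha2 : a ≤ h - 1) (hb1 : 1 ≤ b) (hb2 : b ≤ h - 1)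
  (I1 : a*y ≤ h*x) (I2 : b*x ≤ h*y) (I3 : (h-b)*x + (h-a)*y ≤ h^2 - a*b)

include ha1 ha2 hb1 hb2 I1 I2 I3

lemma aux_basics : 0 ≤ x ∧ 0 ≤ y ∧ x ≤ h ∧ y ≤ h := by
  have hD : 0 < h^2 - a*b := by nlinarith
  refine ⟨by nlinarith, by nlinarith, by nlinarith, by nlinarith⟩

lemma aux_case0 (hv : ¬(x = 0 ∧ y = 0)) : 1 ≤ x ∧ x ≤ h ∧ 1 ≤ y ∧ y ≤ h := by
  obtain ⟨hx0, hy0, hxh, hyh⟩ := aux_basics h a b x y ha1 ha2 hb1 hb2 I1 I2 I3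
  have hx1 : 1 ≤ x := by
    rcases lt_or_ge 0 x with h' | h'
    · omega
    · have hx : x = 0 := by omega
      have : y ≤ 0 := by nlinarith
      omega
  have hy1 : 1 ≤ y := by
    rcases lt_or_ge 0 y with h' | h'
    · omega
    · have hy : y = 0 := by omega
      have : x ≤ 0 := by nlinarith
      omega
  exact ⟨hx1, hxh, hy1, hyh⟩

lemma aux_case1 (hab : h ≤ a + b) (hv : ¬(x = a ∧ y = h)) :
    0 ≤ y ∧ y ≤ h - 1 ∧ 0 ≤ x - y + (h-a-1) ∧ x - y + (h-a-1) ≤ h - 1 := by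
  obtain ⟨hx0, hy0, hxh, hyh⟩ := aux_basics h a b x y ha1 ha2 hb1 hb2 I1 I2 I3
  have hyh1 : y ≤ h - 1 := by
    by_contra hc
    have hy : y = h := by omega
    subst hy
    have h1 : a ≤ x := by nlinarith
    have h2 : x ≤ a := by nlinarith
    omega
  have hxy : x - y ≤ h - b := by nlinarith
  have hxy2 : a - h + 1 ≤ x - y := by
    by_contra hc
    have hc' : x ≤ y + a - h := by omega
    have hy : h ≤ y := by nlinarith
    have hy' : y = h := by omega
    subst hy'
    have h1 : a ≤ x := by nlinarith
    omega
  omega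

lemma aux_case2 (hab : h ≤ a + b) (hv : ¬(x = h ∧ y = b)) :
    0 ≤ x ∧ x ≤ h - 1 ∧ 0 ≤ y - x + (h-b-1) ∧ y - x + (h-b-1) ≤ h - 1 := by
  obtain ⟨hx0, hy0, hxh, hyh⟩ := aux_basics h a b x y ha1 ha2 hb1 hb2 I1 I2 I3
  have hxh1 : x ≤ h - 1 := by
    by_contra hc
    have hx : x = h := by omega
    subst hx
    have h1 : b ≤ y := by nlinarith
    have h2 : y ≤ b := by nlinarith
    omega
  have hxy : y - x ≤ h - a := by nlinarith
  have hxy2 : b - h + 1 ≤ y - x := by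
    by_contra hc
    have hc' : y ≤ x + b - h := by omega
    have hx : h ≤ x := by nlinarith
    have hx' : x = h := by omega
    subst hx'
    have h1 : b ≤ y := by nlinarith
    omega
  omega

end CaseLemmas

lemma aux_Tineq (h a b : ℤ) (ha1 : 1 ≤ a) (ha2 : a ≤ h-1) (hb1 : 1 ≤ b) (hb2 : b ≤ h-1)
    (x : Fin 2 → ℝ)
    (hx : x ∈ convexHull ℝ {(![0,0] : Fin 2 → ℝ), ![(a:ℝ),(h:ℝ)], ![(h:ℝ),(b:ℝ)]}) :
    (a:ℝ) * x 1 ≤ (h:ℝ) * x 0 ∧ (b:ℝ) * x 0 ≤ (h:ℝ) * x 1 ∧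
      ((h:ℝ)-b) * x 0 + ((h:ℝ)-a) * x 1 ≤ (h:ℝ)^2 - (a:ℝ)*(b:ℝ) := by
  have c1 : (1:ℝ) ≤ (a:ℝ) := by exact_mod_cast ha1
  have c2 : (a:ℝ) ≤ (h:ℝ)-1 := by exact_mod_cast (by omega : a ≤ h - 1)
  have c3 : (1:ℝ) ≤ (b:ℝ) := by exact_mod_cast hb1
  have c4 : (b:ℝ) ≤ (h:ℝ)-1 := by exact_mod_cast (by omega : b ≤ h - 1)
  refine ⟨?_, ?_, ?_⟩
  · have := aux_hull_le (-(h:ℝ)) (a:ℝ) 0 ?_ x hx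
    · linarith
    · rintro v hv
      simp only [Set.mem_insert_iff, Set.mem_singleton_iff] at hv
      rcases hv with rfl | rfl | rfl <;> simp <;> nlinarith
  · have := aux_hull_le (b:ℝ) (-(h:ℝ)) 0 ?_ x hx
    · linarith
    · rintro v hv
      simp only [Set.mem_insert_iff, Set.mem_singleton_iff] at hv
      rcases hv with rfl | rfl | rfl <;> simp <;> nlinarith
  · have := aux_hull_le ((h:ℝ)-b) ((h:ℝ)-a) ((h:ℝ)^2 - (a:ℝ)*(b:ℝ)) ?_ x hx
    · linarith
    · rintro v hv
      simp only [Set.mem_insert_iff, Set.mem_singleton_iff] at hv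
      rcases hv with rfl | rfl | rfl <;> simp <;> nlinarith

lemma aux_memT (h a b : ℤ) (ha1 : 1 ≤ a) (ha2 : a ≤ h-1) (hb1 : 1 ≤ b) (hb2 : b ≤ h-1) :
    (![(a:ℝ), (h:ℝ)-1]) ∈
      convexHull ℝ {(![0,0] : Fin 2 → ℝ), ![(a:ℝ),(h:ℝ)], ![(h:ℝ),(b:ℝ)]} := by
  have c1 : (1:ℝ) ≤ (a:ℝ) := by exact_mod_cast ha1
  have c2 : (a:ℝ) ≤ (h:ℝ)-1 := by exact_mod_cast (by omega : a ≤ h - 1)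
  have c3 : (1:ℝ) ≤ (b:ℝ) := by exact_mod_cast hb1
  have c4 : (b:ℝ) ≤ (h:ℝ)-1 := by exact_mod_cast (by omega : b ≤ h - 1)
  set D : ℝ := (h:ℝ)^2 - (a:ℝ)*(b:ℝ) with hDdef
  have hD : 0 < D := by rw [hDdef]; nlinarith
  set w : Fin 3 → ℝ := ![((h:ℝ)-(a:ℝ))/D, ((h:ℝ)^2-(h:ℝ)-(a:ℝ)*(b:ℝ))/D, (a:ℝ)/D] with hw
  set z : Fin 3 → (Fin 2 → ℝ) := ![![0,0], ![(a:ℝ),(h:ℝ)], ![(h:ℝ),(b:ℝ)]] with hz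
  have key := (convex_convexHull ℝ
      {(![0,0] : Fin 2 → ℝ), ![(a:ℝ),(h:ℝ)], ![(h:ℝ),(b:ℝ)]}).sum_mem
    (t := Finset.univ) (w := w) (z := z) ?_ ?_ ?_
  · have : ∑ i : Fin 3, w i • z i = ![(a:ℝ), (h:ℝ)-1] := by
      rw [Fin.sum_univ_three]
      funext i
      fin_cases i <;>
        simp [hw, hz, Pi.add_apply, Pi.smul_apply, smul_eq_mul] <;>
        field_simp <;> ring
    rwa [this] at key
  · intro i _
    fin_cases i <;> simp only [hw, Matrix.cons_val_zero, Matrix.cons_val_one, Matrix.head_cons,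
      Fin.mk_zero, Fin.mk_one, Matrix.cons_val_fin_one] <;>
      apply div_nonneg _ hD.le <;> nlinarith
  · rw [Fin.sum_univ_three]
    simp only [hw, Matrix.cons_val_zero, Matrix.cons_val_one, Matrix.head_cons,
      Matrix.cons_val_two, Matrix.tail_cons]
    field_simp
    ring
  · intro i _
    fin_cases i <;> simp only [hz, Matrix.cons_val_zero, Matrix.cons_val_one, Matrix.head_cons,
      Fin.mk_zero, Fin.mk_one, Matrix.cons_val_fin_one] <;>
      apply subset_convexHull <;> simp

/-- For integers `1 ≤ a, b ≤ h-1`, the lattice triangle `T = conv{(0,0),(a,h),(h,b)}`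
(which has `ls_□(T) = h`) is minimal iff `a + b ≥ h`. -/
theorem stmt13 (h a b : ℤ) (hh : 0 < h)
    (ha1 : 1 ≤ a) (ha2 : a ≤ h - 1) (hb1 : 1 ≤ b) (hb2 : b ≤ h - 1)
    (T : Set (Fin 2 → ℝ))
    (hT : T = convexHull ℝ
      {(![0, 0] : Fin 2 → ℝ), ![(a : ℝ), (h : ℝ)], ![(h : ℝ), (b : ℝ)]})
    (hls : lsSquare T = (h : ℝ)) :
    (∀ P' : Set (Fin 2 → ℝ), IsLatticePolygon P' → P' ⊂ T → lsSquare P' < (h : ℝ)) ↔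
      h ≤ a + b := by
  constructor
  · intro hmin
    by_contra hab'
    have hab : a + b ≤ h - 1 := by omega
    have ch : (3:ℝ) ≤ (h:ℝ) := by exact_mod_cast (by omega : (3:ℤ) ≤ h)
    have ca : (1:ℝ) ≤ (a:ℝ) := by exact_mod_cast ha1
    have ca2 : (a:ℝ) ≤ (h:ℝ)-1 := by exact_mod_cast (by omega : a ≤ h - 1)
    have cb : (1:ℝ) ≤ (b:ℝ) := by exact_mod_cast hb1
    have cb2 : (b:ℝ) ≤ (h:ℝ)-1 := by exact_mod_cast (by omega : b ≤ h - 1)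
    classical
    set S : Finset (Fin 2 → ℤ) := {![0,0], ![h,b], ![a,h-1]} with hS
    set X : Set (Fin 2 → ℝ) := (fun p : Fin 2 → ℤ => fun i => (p i : ℝ)) '' (S : Set (Fin 2 → ℤ))
      with hX
    set P' : Set (Fin 2 → ℝ) := convexHull ℝ X with hP'
    have hmemX : ∀ s ∈ S, (fun i => ((s i : ℤ):ℝ)) ∈ P' := fun s hs =>
      subset_convexHull ℝ _ ⟨s, hs, rfl⟩
    have hlat : IsLatticePolygon P' := ⟨S, ⟨![0,0], by simp [hS]⟩, rfl⟩
    -- P' ⊆ T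
    have hsubT : P' ⊆ T := by
      rw [hP', hT]
      apply convexHull_min
      rintro v ⟨s, hs, rfl⟩
      simp only [hS, Finset.coe_insert, Set.mem_insert_iff, Finset.coe_singleton,
        Set.mem_singleton_iff] at hs
      rcases hs with rfl | rfl | rfl
      · have he : (fun i => ((![(0:ℤ),0] i : ℤ):ℝ)) = (![0,0] : Fin 2 → ℝ) := by
          funext i; fin_cases i <;> simp
        beta_reduce
        rw [he]; exact subset_convexHull ℝ _ (by simp)
      · have he : (fun i => ((![h,b] i : ℤ):ℝ)) = (![(h:ℝ),(b:ℝ)] : Fin 2 → ℝ) := by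
          funext i; fin_cases i <;> simp
        beta_reduce
        rw [he]; exact subset_convexHull ℝ _ (by simp)
      · have he : (fun i => ((![a,h-1] i : ℤ):ℝ)) = (![(a:ℝ),(h:ℝ)-1] : Fin 2 → ℝ) := by
          funext i; fin_cases i <;> simp
        beta_reduce
        rw [he]; exact aux_memT h a b ha1 ha2 hb1 hb2
      · exact convex_convexHull ℝ _
    -- properness: (a,h) ∈ T \ P'
    have hne : ¬ T ⊆ P' := by
      intro hc
      have hv1 : (![(a:ℝ),(h:ℝ)] : Fin 2 → ℝ) ∈ P' := by
        apply hc
        rw [hT]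
        exact subset_convexHull ℝ _ (by simp)
      have hbd := aux_hull_le 0 1 ((h:ℝ)-1) ?_ _ (hP' ▸ hv1)
      · simp at hbd; linarith
      · rintro v ⟨s, hs, rfl⟩
        simp only [hS, Finset.coe_insert, Set.mem_insert_iff, Finset.coe_singleton,
          Set.mem_singleton_iff] at hs
        rcases hs with rfl | rfl | rfl <;> simp <;> push_cast <;> linarith
    have hss : P' ⊂ T := ssubset_iff_subset_ne.mpr ⟨hsubT, fun hc => hne (hc ▸ subset_rfl)⟩
    have hlt := hmin P' hlat hss
    -- lower bound: h ≤ lsSquare P'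
    have hge : (h:ℝ) ≤ lsSquare P' := by
      apply le_csInf
      · -- nonempty: l = h with identity map
        refine ⟨(h:ℝ), by linarith, ?_⟩
        refine ⟨fun x => ((1 : Matrix (Fin 2) (Fin 2) ℤ).map (Int.cast : ℤ → ℝ)).mulVec x
          + fun i => (((0 : Fin 2 → ℤ)) i : ℝ), ⟨1, 0, Or.inl Matrix.det_one, fun x => rfl⟩, ?_⟩
        rw [hP']
        apply aux_image_hull_subset _ _ _ (fun x => rfl) X (aux_convex_squareDilate _)
        rintro v ⟨s, hs, rfl⟩
        have hid : ((1 : Matrix (Fin 2) (Fin 2) ℤ).map (Int.cast : ℤ → ℝ)).mulVec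
            (fun i => ((s i : ℤ):ℝ)) + (fun i => (((0 : Fin 2 → ℤ)) i : ℝ))
            = fun i => ((s i : ℤ):ℝ) := by
          rw [Matrix.map_one _ Int.cast_zero Int.cast_one, Matrix.one_mulVec]
          funext i; simp
        rw [hid]
        simp only [hS, Finset.coe_insert, Set.mem_insert_iff, Finset.coe_singleton,
          Set.mem_singleton_iff] at hs
        rcases hs with rfl | rfl | rfl <;>
          · intro i
            fin_cases i <;>
              (simp only [Matrix.cons_val_zero, Matrix.cons_val_one, Matrix.head_cons,
                Fin.mk_zero, Fin.mk_one, Set.mem_Icc]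
               refine ⟨?_, ?_⟩ <;> push_cast <;> linarith)
      · rintro l ⟨hl0, φ, ⟨A, t, hdet, hφ⟩, himg⟩
        by_contra hlh'
        push_neg at hlh'
        have key : ∀ s ∈ S, ∀ i : Fin 2,
            0 ≤ A i 0 * s 0 + A i 1 * s 1 + t i ∧ A i 0 * s 0 + A i 1 * s 1 + t i ≤ h - 1 := by
          intro s hs i
          have h1 : φ (fun j => ((s j : ℤ):ℝ)) ∈ squareDilate l :=
            himg ⟨_, hmemX s hs, rfl⟩
          have h2 := h1 i
          rw [hφ] at h2
          simp only [Matrix.mulVec, dotProduct, Fin.sum_univ_two, Matrix.map_apply,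
            Pi.add_apply, Set.mem_Icc] at h2
          have hz : ((A i 0 * s 0 + A i 1 * s 1 + t i : ℤ) : ℝ)
              = (A i 0 : ℝ) * ((s 0 : ℤ):ℝ) + (A i 1 : ℝ) * ((s 1 : ℤ):ℝ) + (t i : ℝ) := by
            push_cast; ring
          constructor
          · exact_mod_cast hz ▸ h2.1
          · have : ((A i 0 * s 0 + A i 1 * s 1 + t i : ℤ) : ℝ) < (h:ℝ) := by
              rw [hz]; linarith [h2.2]
            have h3 : A i 0 * s 0 + A i 1 * s 1 + t i < h := by exact_mod_cast this
            omega
        have e0 := key ![0,0] (by simp [hS])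
        have e1 := key ![h,b] (by simp [hS])
        have e2 := key ![a,h-1] (by simp [hS])
        simp only [Matrix.cons_val_zero, Matrix.cons_val_one, Matrix.head_cons] at e0 e1 e2
        have hA0 : ∀ i : Fin 2, A i 0 = 0 := by
          intro i
          obtain ⟨f0, f0'⟩ := e0 i
          obtain ⟨f1, f1'⟩ := e1 i
          obtain ⟨f2, f2'⟩ := e2 i
          refine aux_crux h a b (A i 0) (A i 1) ha1 hb1 hab (by linarith) (by linarith)
            (by linarith) (by linarith)
        have hfalse : (0:ℤ) = 1 ∨ (0:ℤ) = -1 := by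
          rw [Matrix.det_fin_two, hA0 0, hA0 1] at hdet
          simpa using hdet
        rcases hfalse with hf | hf <;> omega
    linarith
  · intro hab P' hlat hsub
    have ch : (2:ℝ) ≤ (h:ℝ) := by exact_mod_cast (by omega : (2:ℤ) ≤ h)
    obtain ⟨S, hSne, hP'⟩ := hlat
    have hgen : ∀ s ∈ S, (fun i => ((s i : ℤ) : ℝ)) ∈ P' := fun s hs =>
      hP' ▸ subset_convexHull ℝ _ ⟨s, hs, rfl⟩
    have hgenT : ∀ s ∈ S, (fun i => ((s i : ℤ) : ℝ)) ∈ T := fun s hs => hsub.subset (hgen s hs)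
    have hInts : ∀ s ∈ S, a * s 1 ≤ h * s 0 ∧ b * s 0 ≤ h * s 1 ∧
        (h-b) * s 0 + (h-a) * s 1 ≤ h^2 - a*b := by
      intro s hs
      have hsT := hgenT s hs
      rw [hT] at hsT
      obtain ⟨J1, J2, J3⟩ := aux_Tineq h a b ha1 ha2 hb1 hb2 _ hsT
      have J1' : (a:ℝ) * ((s 1 : ℤ):ℝ) ≤ (h:ℝ) * ((s 0 : ℤ):ℝ) := J1
      have J2' : (b:ℝ) * ((s 0 : ℤ):ℝ) ≤ (h:ℝ) * ((s 1 : ℤ):ℝ) := J2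
      have J3' : ((h:ℝ)-b) * ((s 0 : ℤ):ℝ) + ((h:ℝ)-a) * ((s 1 : ℤ):ℝ)
          ≤ (h:ℝ)^2 - (a:ℝ)*(b:ℝ) := J3
      refine ⟨by exact_mod_cast J1', by exact_mod_cast J2', by exact_mod_cast J3'⟩
    have hlth : lsSquare P' ≤ (h:ℝ) - 1 := by
      by_cases h0 : (![0,0] : Fin 2 → ℝ) ∈ P'
      · by_cases h1 : (![(a:ℝ),(h:ℝ)] : Fin 2 → ℝ) ∈ P'
        · by_cases h2 : (![(h:ℝ),(b:ℝ)] : Fin 2 → ℝ) ∈ P'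
          · exfalso
            have hTP : T ⊆ P' := by
              rw [hT]
              apply convexHull_min
              · rintro v hv
                simp only [Set.mem_insert_iff, Set.mem_singleton_iff] at hv
                rcases hv with rfl | rfl | rfl <;> assumption
              · rw [hP']; exact convex_convexHull ℝ _
            exact (ssubset_iff_subset_ne.mp hsub).2 (subset_antisymm hsub.subset hTP)
          · -- v2 = (h,b) missing
            rw [hP']
            apply aux_ls_le _ _ (by linarith) !![1,0;-1,1] ![0, h-b-1]
              (Or.inl (by simp [Matrix.det_fin_two_of]))
            rintro v ⟨s, hs, rfl⟩
            obtain ⟨I1, I2, I3⟩ := hInts s hs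
            have hv : ¬(s 0 = h ∧ s 1 = b) := by
              rintro ⟨e1, e2⟩
              apply h2
              have he : (fun i => ((s i : ℤ):ℝ)) = (![(h:ℝ),(b:ℝ)] : Fin 2 → ℝ) := by
                funext i; fin_cases i <;> simp [e1, e2]
              rw [← he]; exact hgen s hs
            obtain ⟨d1, d2, d3, d4⟩ := aux_case2 h a b (s 0) (s 1) ha1 ha2 hb1 hb2 I1 I2 I3 hab hv
            have r1 : (0:ℝ) ≤ ((s 0 : ℤ):ℝ) := by exact_mod_cast d1
            have r2 : ((s 0 : ℤ):ℝ) ≤ (h:ℝ) - 1 := by exact_mod_cast d2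
            have r3 : (0:ℝ) ≤ ((s 1 : ℤ):ℝ) - ((s 0 : ℤ):ℝ) + ((h:ℝ) - (b:ℝ) - 1) := by
              exact_mod_cast d3
            have r4 : ((s 1 : ℤ):ℝ) - ((s 0 : ℤ):ℝ) + ((h:ℝ) - (b:ℝ) - 1) ≤ (h:ℝ) - 1 := by
              exact_mod_cast d4
            intro i
            fin_cases i <;>
              · simp only [Matrix.mulVec, dotProduct, Fin.sum_univ_two, Matrix.map_apply,
                  Pi.add_apply, Matrix.cons_val_zero, Matrix.cons_val_one, Matrix.head_cons,
                  Matrix.cons_val', Matrix.of_apply, Matrix.empty_val',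
                  Matrix.cons_val_fin_one, Fin.mk_zero, Fin.mk_one, Set.mem_Icc,
                  Matrix.vecHead, Matrix.vecTail]
                push_cast
                constructor <;> linarith
        · -- v1 = (a,h) missing
          rw [hP']
          apply aux_ls_le _ _ (by linarith) !![1,-1;0,1] ![h-a-1, 0]
            (Or.inl (by simp [Matrix.det_fin_two_of]))
          rintro v ⟨s, hs, rfl⟩
          obtain ⟨I1, I2, I3⟩ := hInts s hs
          have hv : ¬(s 0 = a ∧ s 1 = h) := by
            rintro ⟨e1, e2⟩
            apply h1
            have he : (fun i => ((s i : ℤ):ℝ)) = (![(a:ℝ),(h:ℝ)] : Fin 2 → ℝ) := by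
              funext i; fin_cases i <;> simp [e1, e2]
            rw [← he]; exact hgen s hs
          obtain ⟨d1, d2, d3, d4⟩ := aux_case1 h a b (s 0) (s 1) ha1 ha2 hb1 hb2 I1 I2 I3 hab hv
          have r1 : (0:ℝ) ≤ ((s 1 : ℤ):ℝ) := by exact_mod_cast d1
          have r2 : ((s 1 : ℤ):ℝ) ≤ (h:ℝ) - 1 := by exact_mod_cast d2
          have r3 : (0:ℝ) ≤ ((s 0 : ℤ):ℝ) - ((s 1 : ℤ):ℝ) + ((h:ℝ) - (a:ℝ) - 1) := by
            exact_mod_cast d3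
          have r4 : ((s 0 : ℤ):ℝ) - ((s 1 : ℤ):ℝ) + ((h:ℝ) - (a:ℝ) - 1) ≤ (h:ℝ) - 1 := by
            exact_mod_cast d4
          intro i
          fin_cases i <;>
            · simp only [Matrix.mulVec, dotProduct, Fin.sum_univ_two, Matrix.map_apply,
                Pi.add_apply, Matrix.cons_val_zero, Matrix.cons_val_one, Matrix.head_cons,
                Matrix.cons_val', Matrix.of_apply, Matrix.empty_val',
                Matrix.cons_val_fin_one, Fin.mk_zero, Fin.mk_one, Set.mem_Icc,
                  Matrix.vecHead, Matrix.vecTail]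
              push_cast
              constructor <;> linarith
      · -- v0 = (0,0) missing
        rw [hP']
        apply aux_ls_le _ _ (by linarith) !![1,0;0,1] ![-1, -1]
          (Or.inl (by simp [Matrix.det_fin_two_of]))
        rintro v ⟨s, hs, rfl⟩
        obtain ⟨I1, I2, I3⟩ := hInts s hs
        have hv : ¬(s 0 = 0 ∧ s 1 = 0) := by
          rintro ⟨e1, e2⟩
          apply h0
          have he : (fun i => ((s i : ℤ):ℝ)) = (![0,0] : Fin 2 → ℝ) := by
            funext i; fin_cases i <;> simp [e1, e2]
          rw [← he]; exact hgen s hs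
        obtain ⟨d1, d2, d3, d4⟩ := aux_case0 h a b (s 0) (s 1) ha1 ha2 hb1 hb2 I1 I2 I3 hv
        have r1 : (1:ℝ) ≤ ((s 0 : ℤ):ℝ) := by exact_mod_cast d1
        have r2 : ((s 0 : ℤ):ℝ) ≤ (h:ℝ) := by exact_mod_cast d2
        have r3 : (1:ℝ) ≤ ((s 1 : ℤ):ℝ) := by exact_mod_cast d3
        have r4 : ((s 1 : ℤ):ℝ) ≤ (h:ℝ) := by exact_mod_cast d4
        intro i
        fin_cases i <;>
          · simp only [Matrix.mulVec, dotProduct, Fin.sum_univ_two, Matrix.map_apply,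
              Pi.add_apply, Matrix.cons_val_zero, Matrix.cons_val_one, Matrix.head_cons,
              Matrix.cons_val', Matrix.of_apply, Matrix.empty_val',
              Matrix.cons_val_fin_one, Fin.mk_zero, Fin.mk_one, Set.mem_Icc,
                  Matrix.vecHead, Matrix.vecTail]
            push_cast
            constructor <;> linarith
    linarith
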